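/- For every function f : ω+1 → ω+1 define f' : ω+1 → ω+1 by f'(0) = f(0); f'(i+1) = min{f(i+1), f'(i) − 1} if f'(i) ≠ 0, and f'(i+1) = 0 if f'(i) = 0; and f'(ω) = ω if f'(i) = ω for all i ∈ ω, otherwise f'(ω) = 0 (with the convention ω − n = ω). Then f' is a waning function, f'(i) ≤ f(i) for all i ∈ ω, and f' is the pointwise largest waning function with this property (i.e., if g is waning with g(i) ≤ f(i) for all i ∈ ω, then g(i) ≤ f'(i) for all i ∈ ω). -/

import Mathlib

open Set Classical

noncomputable section

/-- A partial injection (partial bijection) on ℕ, viewed as a set of pairs. -/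
def IsPInj (g : Set (ℕ × ℕ)) : Prop :=
  ∀ ⦃a b c d : ℕ⦄, (a, b) ∈ g → (c, d) ∈ g → (a = c ↔ b = d)

/-- Domain of a partial injection. -/
def pdom (g : Set (ℕ × ℕ)) : Set ℕ := {x | ∃ y, (x, y) ∈ g}

/-- Image of a partial injection. -/
def pim (g : Set (ℕ × ℕ)) : Set ℕ := {y | ∃ x, (x, y) ∈ g}

/-- Restriction of a partial injection to `{0, …, r-1}`. -/
def pres (g : Set (ℕ × ℕ)) (r : ℕ) : Set (ℕ × ℕ) := {p ∈ g | p.1 < r}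

/-- A waning function `f : ω + 1 → ω + 1`. -/
def Waning (f : ℕ∞ → ℕ∞) : Prop :=
  Antitone f ∧
    ((∀ i, f i = ⊤) ∨
      ((∃ i : ℕ, f i ≠ ⊤) ∧
        ∀ j : ℕ, f j ≠ 0 → f j ≠ ⊤ → f ((j + 1 : ℕ)) < f j))

/-- The inductive definition of `f'` on `ω`. -/
def wan (f : ℕ∞ → ℕ∞) : ℕ → ℕ∞
  | 0 => f 0
  | (i + 1) => if wan f i = 0 then 0 else min (f ((i + 1 : ℕ))) (wan f i - 1)

/-- The extension of `wan f` to `ω + 1`: `f'(ω) = ω` if `f'(i) = ω` for all `i ∈ ω`,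
and `f'(ω) = 0` otherwise. -/
def wanExt (f : ℕ∞ → ℕ∞) : ℕ∞ → ℕ∞ := fun x =>
  if x = ⊤ then (if ∀ i : ℕ, wan f i = ⊤ then ⊤ else 0) else wan f x.toNat

lemma enat_sub_one_lt {a : ℕ∞} (h0 : a ≠ 0) (ht : a ≠ ⊤) : a - 1 < a := by
  lift a to ℕ using ht
  have h : a ≠ 0 := by simpa using h0
  rw [← Nat.cast_one, ← ENat.coe_sub]
  exact_mod_cast Nat.sub_lt (by omega) one_pos

lemma wan_le (f : ℕ∞ → ℕ∞) : ∀ i : ℕ, wan f i ≤ f i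
  | 0 => le_refl _
  | (i + 1) => by
    rw [wan]
    split
    · exact zero_le
    · exact min_le_left _ _

lemma wan_succ_le (f : ℕ∞ → ℕ∞) (i : ℕ) : wan f (i + 1) ≤ wan f i := by
  rw [wan]
  split
  · exact zero_le
  · exact le_trans (min_le_right _ _) tsub_le_self

lemma wan_antitone (f : ℕ∞ → ℕ∞) : Antitone (wan f) :=
  antitone_nat_of_succ_le (wan_succ_le f)

lemma wan_succ_lt (f : ℕ∞ → ℕ∞) (i : ℕ) (h0 : wan f i ≠ 0) (ht : wan f i ≠ ⊤) :
    wan f (i + 1) < wan f i := by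
  rw [wan, if_neg h0]
  exact lt_of_le_of_lt (min_le_right _ _) (enat_sub_one_lt h0 ht)

lemma wanExt_coe (f : ℕ∞ → ℕ∞) (i : ℕ) : wanExt f i = wan f i := by
  simp [wanExt]

lemma wanExt_antitone (f : ℕ∞ → ℕ∞) : Antitone (wanExt f) := by
  intro x y hxy
  by_cases hy : y = ⊤
  · subst hy
    show wanExt f ⊤ ≤ wanExt f x
    simp only [wanExt, if_pos rfl]
    by_cases hall : ∀ i : ℕ, wan f i = ⊤
    · rw [if_pos hall]
      by_cases hx : x = ⊤ <;> simp [wanExt, hx, hall]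
    · rw [if_neg hall]
      exact zero_le
  · have hx : x ≠ ⊤ := fun h => hy (top_le_iff.mp (h ▸ hxy))
    simp only [wanExt, if_neg hx, if_neg hy]
    exact wan_antitone f (ENat.toNat_le_toNat hxy hy)

lemma wan_maximal (f g : ℕ∞ → ℕ∞) (hg : Waning g) (hle : ∀ i : ℕ, g i ≤ f i) :
    ∀ i : ℕ, g i ≤ wan f i := by
  intro i
  induction i with
  | zero => exact hle 0
  | succ i ih =>
    rw [wan]
    by_cases h0 : wan f i = 0
    · rw [if_pos h0]
      calc g ((i + 1 : ℕ)) ≤ g i := hg.1 (by exact_mod_cast Nat.le_succ i)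
        _ ≤ wan f i := ih
        _ = 0 := h0
    · rw [if_neg h0]
      refine le_min (hle (i + 1)) ?_
      rcases hg.2 with hall | ⟨_, hdec⟩
      · have : wan f i = ⊤ := top_le_iff.mp ((hall i) ▸ ih)
        simp [this]
      · by_cases hg0 : g i = 0
        · calc g ((i + 1 : ℕ)) ≤ g i := hg.1 (by exact_mod_cast Nat.le_succ i)
            _ = 0 := hg0
            _ ≤ _ := zero_le
        · by_cases hgt : g i = ⊤
          · have : wan f i = ⊤ := top_le_iff.mp (hgt ▸ ih)
            simp [this]
          · have hlt : g ((i + 1 : ℕ)) < g i := hdec i hg0 hgt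
            have h1 : g ((i + 1 : ℕ)) + 1 ≤ wan f i :=
              (ENat.add_one_le_iff (ne_top_of_lt hlt)).mpr (lt_of_lt_of_le hlt ih)
            exact ENat.le_sub_of_add_le_left (by simp) (by rwa [add_comm] at h1)

/-- `f'` is a waning function, `f'(i) ≤ f(i)` for all `i ∈ ω`, and `f'` is the pointwise
largest waning function with this property. -/
theorem wanExt_is_largest_waning_below (f : ℕ∞ → ℕ∞) :
    Waning (wanExt f) ∧ (∀ i : ℕ, wanExt f i ≤ f i) ∧
      ∀ g : ℕ∞ → ℕ∞, Waning g → (∀ i : ℕ, g i ≤ f i) → ∀ i : ℕ, g i ≤ wanExt f i := by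
  refine ⟨⟨wanExt_antitone f, ?_⟩, ?_, ?_⟩
  · by_cases hall : ∀ i : ℕ, wan f i = ⊤
    · left
      intro x
      by_cases hx : x = ⊤
      · simp [wanExt, hx, hall]
      · simp [wanExt, hx, hall]
    · right
      push_neg at hall
      obtain ⟨i, hi⟩ := hall
      refine ⟨⟨i, by rwa [wanExt_coe]⟩, ?_⟩
      intro j h0 ht
      rw [wanExt_coe] at h0 ht
      rw [wanExt_coe, wanExt_coe]
      exact wan_succ_lt f j h0 ht
  · intro i
    rw [wanExt_coe]
    exact wan_le f i
  · intro g hg hle i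
    rw [wanExt_coe]
    exact wan_maximal f g hg hle i
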